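/- Generalized-eigenvalue characterization of near-double eigenvalues: assume 1+ε ≠ 0 and let v1, v2 ∈ ℂ^N be nonzero vectors and λ ∈ ℂ. Then λ·Δ0(ε)·(v1 ⊗ v2) = Δ1(ε)·(v1 ⊗ v2) holds if and only if there exists E ∈ ℂ such that H(λ)·v1 = E·v1 and H(λ)·v2 = (1+ε)·E·v2; that is, the decomposable eigenvectors of the pencil (Δ0(ε), Δ1(ε)) with eigenvalue λ correspond exactly to the values λ at which H(λ) has a pair of eigenvalues of the form E and (1+ε)·E. -/

import Mathlib

open Matrix
open scoped Kronecker

/-- Kronecker product of two vectors: `(v1 ⊗ v2)(i,j) = v1 i * v2 j`. -/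
noncomputable def kronVec {N : ℕ} (v1 v2 : Fin N → ℂ) : Fin N × Fin N → ℂ :=
  fun p => v1 p.1 * v2 p.2

/-- `Δ0(ε) = −(I ⊗ V) + (1+ε)·(V ⊗ I)`. -/
noncomputable def Delta0 {N : ℕ} (V : Matrix (Fin N) (Fin N) ℂ) (ε : ℂ) :
    Matrix (Fin N × Fin N) (Fin N × Fin N) ℂ :=
  -((1 : Matrix (Fin N) (Fin N) ℂ) ⊗ₖ V) + (1 + ε) • (V ⊗ₖ (1 : Matrix (Fin N) (Fin N) ℂ))

/-- `Δ1(ε) = (I ⊗ H0) − (1+ε)·(H0 ⊗ I)`. -/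
noncomputable def Delta1 {N : ℕ} (H0 : Matrix (Fin N) (Fin N) ℂ) (ε : ℂ) :
    Matrix (Fin N × Fin N) (Fin N × Fin N) ℂ :=
  ((1 : Matrix (Fin N) (Fin N) ℂ) ⊗ₖ H0) - (1 + ε) • (H0 ⊗ₖ (1 : Matrix (Fin N) (Fin N) ℂ))

lemma kron_mulVec {N : ℕ} (A B : Matrix (Fin N) (Fin N) ℂ) (v1 v2 : Fin N → ℂ) :
    (A ⊗ₖ B).mulVec (kronVec v1 v2) = kronVec (A.mulVec v1) (B.mulVec v2) := by
  funext p
  simp only [Matrix.mulVec, dotProduct, kronVec, Matrix.kroneckerMap_apply,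
    Fintype.sum_prod_type, Finset.sum_mul_sum]
  exact Finset.sum_congr rfl fun k _ => Finset.sum_congr rfl fun l _ => by ring

/-- Generalized-eigenvalue characterization of near-double eigenvalues:
for nonzero `v1, v2`, `λ·Δ0(ε)·(v1 ⊗ v2) = Δ1(ε)·(v1 ⊗ v2)` iff there is `E`
with `H(λ)·v1 = E·v1` and `H(λ)·v2 = (1+ε)·E·v2`. -/
theorem stmt_0 {N : ℕ} (hN : 0 < N) (H0 V : Matrix (Fin N) (Fin N) ℂ)
    (ε : ℂ) (hε : 1 + ε ≠ 0) (v1 v2 : Fin N → ℂ) (hv1 : v1 ≠ 0) (hv2 : v2 ≠ 0) (lam : ℂ) :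
    lam • (Delta0 V ε).mulVec (kronVec v1 v2) = (Delta1 H0 ε).mulVec (kronVec v1 v2) ↔
      ∃ E : ℂ, (H0 + lam • V).mulVec v1 = E • v1 ∧
        (H0 + lam • V).mulVec v2 = ((1 + ε) * E) • v2 := by
  set A := H0 + lam • V with hA
  have hAmul : ∀ w : Fin N → ℂ, A.mulVec w = H0.mulVec w + lam • V.mulVec w := by
    intro w
    rw [hA, Matrix.add_mulVec, Matrix.smul_mulVec]
  -- step 1: the pencil equation is equivalent to a pointwise bilinear identity
  have h1 : (lam • (Delta0 V ε).mulVec (kronVec v1 v2)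
        = (Delta1 H0 ε).mulVec (kronVec v1 v2)) ↔
      ∀ i j, v1 i * (A.mulVec v2) j = (1 + ε) * ((A.mulVec v1) i * v2 j) := by
    rw [funext_iff]
    constructor
    · intro h i j
      have hh := h (i, j)
      simp only [Delta0, Delta1, Matrix.add_mulVec, Matrix.sub_mulVec, Matrix.neg_mulVec,
        Matrix.smul_mulVec, kron_mulVec, Matrix.one_mulVec, Pi.smul_apply, Pi.add_apply,
        Pi.sub_apply, Pi.neg_apply, smul_eq_mul, kronVec] at hh
      simp only [hAmul, Pi.add_apply, Pi.smul_apply, smul_eq_mul]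
      linear_combination -hh
    · intro h p
      have hh := h p.1 p.2
      simp only [hAmul, Pi.add_apply, Pi.smul_apply, smul_eq_mul] at hh
      simp only [Delta0, Delta1, Matrix.add_mulVec, Matrix.sub_mulVec, Matrix.neg_mulVec,
        Matrix.smul_mulVec, kron_mulVec, Matrix.one_mulVec, Pi.smul_apply, Pi.add_apply,
        Pi.sub_apply, Pi.neg_apply, smul_eq_mul, kronVec]
      linear_combination -hh
  rw [h1]
  constructor
  · intro h
    obtain ⟨i0, hi0⟩ : ∃ i, v1 i ≠ 0 := by
      by_contra hc
      push_neg at hc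
      exact hv1 (funext hc)
    obtain ⟨j0, hj0⟩ : ∃ j, v2 j ≠ 0 := by
      by_contra hc
      push_neg at hc
      exact hv2 (funext hc)
    refine ⟨(A.mulVec v2) j0 / ((1 + ε) * v2 j0), ?_, ?_⟩
    · funext i
      have hh := h i j0
      simp only [Pi.smul_apply, smul_eq_mul]
      field_simp
      linear_combination -hh
    · funext j
      have hh := h i0 j
      have hh0 := h i0 j0
      have key : (A.mulVec v2) j * v2 j0 = (A.mulVec v2) j0 * v2 j := by
        apply mul_left_cancel₀ hi0
        linear_combination v2 j0 * hh - v2 j * hh0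
      simp only [Pi.smul_apply, smul_eq_mul]
      field_simp
      linear_combination key
  · rintro ⟨E, h1', h2'⟩ i j
    have e1 : A.mulVec v1 i = E * v1 i := by rw [h1']; simp
    have e2 : A.mulVec v2 j = (1 + ε) * E * v2 j := by rw [h2']; simp
    rw [e1, e2]; ring
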